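/- Let X = (x₀, x₁, x₂) ∈ ℝ³ with 0 < x₀ < x₁ < x₂ and x₀, x₁, x₂ linearly independent over ℚ, and consider any run of the Smallest Vector Algorithm started at X. For every s ∈ T (i.e. every s with ‖g_III'⁽ˢ⁾‖ < ‖g_III'⁽ˢ⁺¹⁾‖), one has ‖g_II'⁽ˢ⁾‖ > (1/2)·‖g_III'⁽ˢ⁾‖, and for all i, j ∈ {0,1,2} with i ≠ j the undirected angle between gᵢ'⁽ˢ⁾ and gⱼ'⁽ˢ⁾ is strictly greater than π/3. -/

import Mathlib

open Filter InnerProductGeometry Polynomial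

noncomputable section

abbrev E3 := EuclideanSpace ℝ (Fin 3)

/-- Identify a plain function `Fin 3 → ℝ` with a point of Euclidean 3-space. -/
def toE3 (v : Fin 3 → ℝ) : E3 := (WithLp.equiv 2 (Fin 3 → ℝ)).symm v

/-- The point of Euclidean 3-space attached to an integer vector. -/
def toR3 (v : Fin 3 → ℤ) : E3 := toE3 fun i => (v i : ℝ)

/-- Orthogonal projection of `h` onto the line `ℝ·X` (written `h''`). -/
def projL (X h : E3) : E3 := ((inner ℝ h X : ℝ) / ‖X‖ ^ 2) • X

/-- Orthogonal projection of `h` onto the plane `X^⊥` (written `h'`). -/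
def projPl (X h : E3) : E3 := h - projL X h

/-- `gᵢ'` : projection of the `i`-th column onto the plane `X^⊥`. -/
def colP (X : E3) (g : Fin 3 → Fin 3 → ℤ) (i : Fin 3) : E3 := projPl X (toR3 (g i))

/-- `gᵢ''` : projection of the `i`-th column onto the line `ℝ·X`. -/
def colL (X : E3) (g : Fin 3 → Fin 3 → ℤ) (i : Fin 3) : E3 := projL X (toR3 (g i))

def max3 (f : Fin 3 → ℝ) : ℝ := max (f 0) (max (f 1) (f 2))

def min3 (f : Fin 3 → ℝ) : ℝ := min (f 0) (min (f 1) (f 2))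

/-- One step of the Smallest Vector Algorithm: from the columns `g` to the columns `g'`. -/
def SVAStep (X : E3) (g g' : Fin 3 → Fin 3 → ℤ) : Prop :=
  ∃ f : Fin 3 → Fin 3 → ℤ,
    ((min3 ![‖colP X g 1 - colP X g 0‖, ‖colP X g 2 - colP X g 1‖, ‖colP X g 2 - colP X g 0‖]
        = ‖colP X g 1 - colP X g 0‖ ∧ f = ![g 0, g 1 - g 0, g 2]) ∨
     (min3 ![‖colP X g 1 - colP X g 0‖, ‖colP X g 2 - colP X g 1‖, ‖colP X g 2 - colP X g 0‖]
        = ‖colP X g 2 - colP X g 1‖ ∧ f = ![g 0, g 1, g 2 - g 1]) ∨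
     (min3 ![‖colP X g 1 - colP X g 0‖, ‖colP X g 2 - colP X g 1‖, ‖colP X g 2 - colP X g 0‖]
        = ‖colP X g 2 - colP X g 0‖ ∧ f = ![g 0, g 1, g 2 - g 0])) ∧
    ∃ σ : Equiv.Perm (Fin 3), (∀ i, g' i = f (σ i)) ∧
      ‖colL X g' 0‖ ≤ ‖colL X g' 1‖ ∧ ‖colL X g' 1‖ ≤ ‖colL X g' 2‖

/-- A run of the Smallest Vector Algorithm started at `X`: `g s i` is the `i`-th column of `G⁽ˢ⁾`. -/
def IsSVARun (X : E3) (g : ℕ → Fin 3 → Fin 3 → ℤ) : Prop :=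
  (∀ i j, g 0 i j = if i = j then 1 else 0) ∧ ∀ s, SVAStep X (g s) (g (s + 1))

/-- The cofactor vector `X⁽ˢ⁾ = ᵀG⁽ˢ⁾·X`. -/
def cofVec (X : E3) (g : Fin 3 → Fin 3 → ℤ) (i : Fin 3) : ℝ := (inner ℝ (toR3 (g i)) X : ℝ)

lemma toR3_sub (a b : Fin 3 → ℤ) : toR3 (a - b) = toR3 a - toR3 b := by
  ext i
  simp [toR3, toE3]

lemma projPl_sub (X u v : E3) : projPl X (u - v) = projPl X u - projPl X v := by
  simp only [projPl, projL, inner_sub_left]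
  rw [sub_div, sub_smul]
  abel

lemma le_max3 (f : Fin 3 → ℝ) (i : Fin 3) : f i ≤ max3 f := by
  unfold max3
  fin_cases i
  · exact le_max_left _ _
  · exact le_trans (le_max_left _ _) (le_max_right _ _)
  · exact le_trans (le_max_right _ _) (le_max_right _ _)

lemma max3_le {f : Fin 3 → ℝ} {a : ℝ} (h : ∀ i, f i ≤ a) : max3 f ≤ a := by
  simp only [max3, max_le_iff]
  exact ⟨h 0, h 1, h 2⟩

lemma min3_le (f : Fin 3 → ℝ) (i : Fin 3) : min3 f ≤ f i := by
  unfold min3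
  fin_cases i
  · exact min_le_left _ _
  · exact le_trans (min_le_right _ _) (min_le_left _ _)
  · exact le_trans (min_le_right _ _) (min_le_right _ _)

lemma max3_perm (f : Fin 3 → ℝ) (σ : Equiv.Perm (Fin 3)) :
    max3 (fun i => f (σ i)) = max3 f := by
  apply le_antisymm
  · exact max3_le fun i => le_max3 f (σ i)
  · refine max3_le fun i => ?_
    calc f i = f (σ (σ⁻¹ i)) := by simp
    _ ≤ max3 fun j => f (σ j) := le_max3 (fun j => f (σ j)) (σ⁻¹ i)

/-- Lemma: Geometry on `T`. -/
theorem sva_geometry_on_T (Y : E3) (h0 : 0 < Y 0) (h01 : Y 0 < Y 1) (h12 : Y 1 < Y 2)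
    (hind : LinearIndependent ℚ fun i : Fin 3 => Y i)
    (g : ℕ → Fin 3 → Fin 3 → ℤ) (hg : IsSVARun Y g) (s : ℕ)
    (hT : (max3 fun i => ‖colP Y (g s) i‖) < max3 fun i => ‖colP Y (g (s + 1)) i‖)
    (σ : Equiv.Perm (Fin 3))
    (hσ : ‖colP Y (g s) (σ 0)‖ ≤ ‖colP Y (g s) (σ 1)‖ ∧
          ‖colP Y (g s) (σ 1)‖ ≤ ‖colP Y (g s) (σ 2)‖) :
    (1 / 2) * ‖colP Y (g s) (σ 2)‖ < ‖colP Y (g s) (σ 1)‖ ∧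
    ∀ i j : Fin 3, i ≠ j →
      Real.pi / 3 < InnerProductGeometry.angle (colP Y (g s) i) (colP Y (g s) j) := by
  clear h0 h01 h12 hind
  set p : Fin 3 → E3 := colP Y (g s) with hp
  set M : ℝ := max3 fun i => ‖p i‖ with hM
  obtain ⟨-, hstep⟩ := hg
  obtain ⟨f, hf, τ, hτ, -⟩ := hstep s
  -- the new projected columns are a permutation of those of `f`
  have hcol : ∀ i, colP Y (g (s + 1)) i = colP Y f (τ i) := by
    intro i
    simp only [colP, hτ i]
  have hmax : M < max3 fun i => ‖colP Y f i‖ := by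
    calc M < max3 fun i => ‖colP Y (g (s + 1)) i‖ := hT
    _ = max3 fun i => ‖colP Y f (τ i)‖ := by simp only [hcol]
    _ = max3 fun i => ‖colP Y f i‖ := max3_perm (fun i => ‖colP Y f i‖) τ
  -- in each case, the new vector has projected norm > M, hence so do all pairwise differences
  have key3 : M < ‖p 1 - p 0‖ ∧ M < ‖p 2 - p 1‖ ∧ M < ‖p 2 - p 0‖ := by
    have h0M : ‖p 0‖ ≤ M := le_max3 (fun i => ‖p i‖) 0
    have h1M : ‖p 1‖ ≤ M := le_max3 (fun i => ‖p i‖) 1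
    have h2M : ‖p 2‖ ≤ M := le_max3 (fun i => ‖p i‖) 2
    have hd01 : min3 ![‖p 1 - p 0‖, ‖p 2 - p 1‖, ‖p 2 - p 0‖] ≤ ‖p 1 - p 0‖ := by
      have := min3_le ![‖p 1 - p 0‖, ‖p 2 - p 1‖, ‖p 2 - p 0‖] 0
      simpa using this
    have hd12 : min3 ![‖p 1 - p 0‖, ‖p 2 - p 1‖, ‖p 2 - p 0‖] ≤ ‖p 2 - p 1‖ := by
      have := min3_le ![‖p 1 - p 0‖, ‖p 2 - p 1‖, ‖p 2 - p 0‖] 1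
      simpa using this
    have hd02 : min3 ![‖p 1 - p 0‖, ‖p 2 - p 1‖, ‖p 2 - p 0‖] ≤ ‖p 2 - p 0‖ := by
      have := min3_le ![‖p 1 - p 0‖, ‖p 2 - p 1‖, ‖p 2 - p 0‖] 2
      simpa using this
    rcases hf with ⟨hmin, hfe⟩ | ⟨hmin, hfe⟩ | ⟨hmin, hfe⟩ <;> subst hfe
    · have e0 : colP Y ![g s 0, g s 1 - g s 0, g s 2] 0 = p 0 := rfl
      have e1 : colP Y ![g s 0, g s 1 - g s 0, g s 2] 1 = p 1 - p 0 := by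
        show projPl Y (toR3 (g s 1 - g s 0)) = _
        rw [toR3_sub, projPl_sub]; rfl
      have e2 : colP Y ![g s 0, g s 1 - g s 0, g s 2] 2 = p 2 := rfl
      have hMd : M < ‖p 1 - p 0‖ := by
        by_contra h
        push_neg at h
        have hb : max3 (fun i => ‖colP Y ![g s 0, g s 1 - g s 0, g s 2] i‖) ≤ M := by
          unfold max3
          refine max_le ?_ (max_le ?_ ?_)
          · show ‖colP Y ![g s 0, g s 1 - g s 0, g s 2] 0‖ ≤ M
            rw [e0]; exact h0M
          · show ‖colP Y ![g s 0, g s 1 - g s 0, g s 2] 1‖ ≤ M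
            rw [e1]; exact h
          · show ‖colP Y ![g s 0, g s 1 - g s 0, g s 2] 2‖ ≤ M
            rw [e2]; exact h2M
        linarith
      rw [← hp] at hmin
      rw [← hmin] at hMd
      exact ⟨hMd.trans_le hd01, hMd.trans_le hd12, hMd.trans_le hd02⟩
    · have e0 : colP Y ![g s 0, g s 1, g s 2 - g s 1] 0 = p 0 := rfl
      have e1 : colP Y ![g s 0, g s 1, g s 2 - g s 1] 1 = p 1 := rfl
      have e2 : colP Y ![g s 0, g s 1, g s 2 - g s 1] 2 = p 2 - p 1 := by
        show projPl Y (toR3 (g s 2 - g s 1)) = _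
        rw [toR3_sub, projPl_sub]; rfl
      have hMd : M < ‖p 2 - p 1‖ := by
        by_contra h
        push_neg at h
        have hb : max3 (fun i => ‖colP Y ![g s 0, g s 1, g s 2 - g s 1] i‖) ≤ M := by
          unfold max3
          refine max_le ?_ (max_le ?_ ?_)
          · show ‖colP Y ![g s 0, g s 1, g s 2 - g s 1] 0‖ ≤ M
            rw [e0]; exact h0M
          · show ‖colP Y ![g s 0, g s 1, g s 2 - g s 1] 1‖ ≤ M
            rw [e1]; exact h1M
          · show ‖colP Y ![g s 0, g s 1, g s 2 - g s 1] 2‖ ≤ M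
            rw [e2]; exact h
        linarith
      rw [← hp] at hmin
      rw [← hmin] at hMd
      exact ⟨hMd.trans_le hd01, hMd.trans_le hd12, hMd.trans_le hd02⟩
    · have e0 : colP Y ![g s 0, g s 1, g s 2 - g s 0] 0 = p 0 := rfl
      have e1 : colP Y ![g s 0, g s 1, g s 2 - g s 0] 1 = p 1 := rfl
      have e2 : colP Y ![g s 0, g s 1, g s 2 - g s 0] 2 = p 2 - p 0 := by
        show projPl Y (toR3 (g s 2 - g s 0)) = _
        rw [toR3_sub, projPl_sub]; rfl
      have hMd : M < ‖p 2 - p 0‖ := by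
        by_contra h
        push_neg at h
        have hb : max3 (fun i => ‖colP Y ![g s 0, g s 1, g s 2 - g s 0] i‖) ≤ M := by
          unfold max3
          refine max_le ?_ (max_le ?_ ?_)
          · show ‖colP Y ![g s 0, g s 1, g s 2 - g s 0] 0‖ ≤ M
            rw [e0]; exact h0M
          · show ‖colP Y ![g s 0, g s 1, g s 2 - g s 0] 1‖ ≤ M
            rw [e1]; exact h1M
          · show ‖colP Y ![g s 0, g s 1, g s 2 - g s 0] 2‖ ≤ M
            rw [e2]; exact h
        linarith
      rw [← hp] at hmin
      rw [← hmin] at hMd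
      exact ⟨hMd.trans_le hd01, hMd.trans_le hd12, hMd.trans_le hd02⟩
  obtain ⟨k01, k12, k02⟩ := key3
  have key : ∀ i j : Fin 3, i ≠ j → M < ‖p i - p j‖ := by
    intro i j hij
    fin_cases i <;> fin_cases j <;>
      first
      | exact absurd rfl hij
      | assumption
      | (rw [norm_sub_rev]; assumption)
  constructor
  · -- ‖g_II'‖ > M/2
    have h10 : σ 1 ≠ σ 0 := σ.injective.ne (by decide)
    have h1 : M < ‖p (σ 1) - p (σ 0)‖ := key _ _ h10
    have h2 : ‖p (σ 1) - p (σ 0)‖ ≤ ‖p (σ 1)‖ + ‖p (σ 0)‖ := norm_sub_le _ _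
    have h3 : ‖p (σ 2)‖ ≤ M := le_max3 (fun i => ‖p i‖) (σ 2)
    have h4 : ‖p (σ 0)‖ ≤ ‖p (σ 1)‖ := hσ.1
    linarith
  · intro i j hij
    have hd := key i j hij
    have haM : ‖p i‖ ≤ M := le_max3 (fun i => ‖p i‖) i
    have hbM : ‖p j‖ ≤ M := le_max3 (fun i => ‖p i‖) j
    have hpi : p i ≠ 0 := by
      intro h
      have hd' := key i j hij
      rw [h, zero_sub, norm_neg] at hd'
      linarith
    have hpj : p j ≠ 0 := by
      intro h
      have hd' := key i j hij
      rw [h, sub_zero] at hd'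
      linarith
    have ha : 0 < ‖p i‖ := norm_pos_iff.2 hpi
    have hb : 0 < ‖p j‖ := norm_pos_iff.2 hpj
    have hsq : ‖p i - p j‖ ^ 2 = ‖p i‖ ^ 2 - 2 * inner ℝ (p i) (p j) + ‖p j‖ ^ 2 :=
      norm_sub_sq_real (p i) (p j)
    have hM2 : M ^ 2 < ‖p i - p j‖ ^ 2 := by
      have hM0 : 0 ≤ M := le_trans ha.le haM
      nlinarith
    have hinner : (inner ℝ (p i) (p j) : ℝ) < ‖p i‖ * ‖p j‖ / 2 := by
      nlinarith [mul_nonneg (sub_nonneg.2 haM) (sub_nonneg.2 hbM),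
        mul_le_mul_of_nonneg_left haM ha.le, mul_le_mul_of_nonneg_left hbM hb.le]
    have habpos : 0 < ‖p i‖ * ‖p j‖ := mul_pos ha hb
    have hc : (inner ℝ (p i) (p j) : ℝ) / (‖p i‖ * ‖p j‖) < 1 / 2 := by
      rw [div_lt_iff₀ habpos]
      linarith
    have habs : |(inner ℝ (p i) (p j) : ℝ)| ≤ ‖p i‖ * ‖p j‖ := abs_real_inner_le_norm _ _
    have hcm1 : -1 ≤ (inner ℝ (p i) (p j) : ℝ) / (‖p i‖ * ‖p j‖) := by
      rw [le_div_iff₀ habpos]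
      have := abs_le.1 habs
      linarith [this.1]
    have hc1 : (inner ℝ (p i) (p j) : ℝ) / (‖p i‖ * ‖p j‖) ≤ 1 := by
      rw [div_le_one habpos]
      exact le_of_abs_le habs
    have harc : Real.arccos (1 / 2) = Real.pi / 3 := by
      rw [show (1 : ℝ) / 2 = Real.cos (Real.pi / 3) from Real.cos_pi_div_three.symm,
        Real.arccos_cos (by positivity) (by linarith [Real.pi_pos])]
    rw [InnerProductGeometry.angle, ← harc]
    exact Real.strictAntiOn_arccos
      ⟨hcm1, hc1⟩ ⟨by norm_num, by norm_num⟩ hc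

end
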